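/- For every integer k ≥ 1, the alternating orientation of the path P_{4k+1}, in which every even-indexed vertex v_{2i} has its two incident edges oriented outward (arcs v_{2i} → v_{2i−1} and v_{2i} → v_{2i+1}), satisfies χ_d = k+2; in particular this orientation attains the minimum dominator chromatic number over all orientations of P_{4k+1}. -/

import Mathlib

/-- A vertex `v` dominates the color class of color `a` under coloring `c`:
the class is nonempty and every vertex of that color is an out-neighbor of `v`. -/
def Dominates {V α : Type*} (A : V → V → Prop) (c : V → α) (v : V) (a : α) : Prop :=
  (∃ w, c w = a) ∧ ∀ w, c w = a → A v w

/-- A dominator coloring of the digraph with arc relation `A`: a proper coloring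
such that every vertex with positive out-degree dominates some color class. -/
def IsDominatorColoring {V α : Type*} (A : V → V → Prop) (c : V → α) : Prop :=
  (∀ u v, A u v → c u ≠ c v) ∧ ∀ v, (∃ w, A v w) → ∃ a, Dominates A c v a

/-- The dominator chromatic number: the least `k` admitting a dominator coloring
with colors in `Fin k`. -/
noncomputable def domChrom {V : Type*} (A : V → V → Prop) : ℕ :=
  sInf {k | ∃ c : V → Fin k, IsDominatorColoring A c}

/-- The arc relation of the orientation of the path `P_n` (vertices `0,…,n-1`)
determined by `o`: the edge between `i` and `i+1` is directed `i → i+1`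
when `o i = true` and `i+1 → i` when `o i = false`. -/
def pathArc (n : ℕ) (o : ℕ → Bool) (u v : Fin n) : Prop :=
  ((u : ℕ) + 1 = (v : ℕ) ∧ o u = true) ∨ ((v : ℕ) + 1 = (u : ℕ) ∧ o v = false)

/-- The minimum of the dominator chromatic number over all orientations of `P_n`. -/
noncomputable def minDomChromPath (n : ℕ) : ℕ :=
  sInf {m | ∃ o : ℕ → Bool, m = domChrom (pathArc n o)}

open Finset

/- ### Auxiliary lemmas -/

lemma pathArc_adj {n : ℕ} {o : ℕ → Bool} {u v : Fin n} (h : pathArc n o u v) :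
    (u : ℕ) + 1 = (v : ℕ) ∨ (v : ℕ) + 1 = (u : ℕ) := by
  rcases h with ⟨h, _⟩ | ⟨h, _⟩
  · exact Or.inl h
  · exact Or.inr h

lemma pathArc_of_adj {n : ℕ} (o : ℕ → Bool) {u v : Fin n} (h : (u : ℕ) + 1 = (v : ℕ)) :
    pathArc n o u v ∨ pathArc n o v u := by
  by_cases ho : o (u : ℕ) = true
  · exact Or.inl (Or.inl ⟨h, ho⟩)
  · exact Or.inr (Or.inr ⟨h, by simpa using ho⟩)

/-- If all elements of a finset of `Fin N` have values among two naturals, its card is `≤ 2`. -/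
lemma card_le_two_of_val {N : ℕ} {s : Finset (Fin N)} {x y : ℕ}
    (h : ∀ a ∈ s, (a : ℕ) = x ∨ (a : ℕ) = y) : s.card ≤ 2 := by
  have h1 : s.card ≤ ({x, y} : Finset ℕ).card := by
    refine Finset.card_le_card_of_injOn (fun a => (a : ℕ)) ?_ ?_
    · intro a ha
      rcases h a ha with h' | h' <;> simp [h']
    · intro a _ b _ hab
      exact Fin.val_injective hab
  exact h1.trans ((Finset.card_insert_le _ _).trans (by simp))

/-- The identity coloring is always a dominator coloring; gives nonemptiness. -/
lemma id_dominator_coloring (n : ℕ) (o : ℕ → Bool) :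
    ∃ c : Fin n → Fin n, IsDominatorColoring (pathArc n o) c := by
  refine ⟨id, ?_, ?_⟩
  · intro u v huv h
    have h1 := pathArc_adj huv
    have h2 : (u : ℕ) = (v : ℕ) := congrArg Fin.val h
    omega
  · rintro v ⟨w, hw⟩
    exact ⟨w, ⟨w, rfl⟩, fun x hx => by rw [show x = w from hx]; exact hw⟩

/-- The key lower bound: any dominator coloring of any orientation of `P_{4k+1}`
uses at least `k+2` colors. -/
lemma lower_bound (k : ℕ) (hk : 1 ≤ k) (o : ℕ → Bool) (m : ℕ)
    (c : Fin (4 * k + 1) → Fin m) (hc : IsDominatorColoring (pathArc (4 * k + 1) o) c) :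
    k + 2 ≤ m := by
  classical
  set A : Fin (4 * k + 1) → Fin (4 * k + 1) → Prop := pathArc (4 * k + 1) o with hA
  obtain ⟨hproper, hdom⟩ := hc
  -- the set of vertices with positive out-degree
  set S : Finset (Fin (4 * k + 1)) := univ.filter (fun v => ∃ w, A v w) with hS
  have hSmem : ∀ v, v ∈ S ↔ ∃ w, A v w := by intro v; simp [hS]
  -- a choice of dominated color for each dominator
  set F : Fin (4 * k + 1) → Fin m := fun v =>
    if h : ∃ a, Dominates A c v a then h.choose else c v with hF
  have hFdom : ∀ v ∈ S, Dominates A c v (F v) := by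
    intro v hv
    have h := hdom v ((hSmem v).1 hv)
    simp only [hF]
    rw [dif_pos h]
    exact h.choose_spec
  set T : Finset (Fin m) := S.image F with hT
  -- |S| ≥ 2k : each of the 4k edges contributes its tail to S, with multiplicity ≤ 2
  have hScard : 2 * k ≤ S.card := by
    set g : Fin (4 * k) → Fin (4 * k + 1) :=
      fun i => if o (i : ℕ) = true then ⟨(i : ℕ), by omega⟩ else ⟨(i : ℕ) + 1, by omega⟩ with hg
    have hgS : ∀ i, g i ∈ S := by
      intro i
      rw [hSmem]
      by_cases hoi : o (i : ℕ) = true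
      · refine ⟨⟨(i : ℕ) + 1, by omega⟩, Or.inl ?_⟩
        simp [hg, hA, hoi]
      · refine ⟨⟨(i : ℕ), by omega⟩, Or.inr ?_⟩
        simp [hg, hA, hoi]
    have hval : ∀ i : Fin (4 * k), (g i : ℕ) = (i : ℕ) ∨ (g i : ℕ) = (i : ℕ) + 1 := by
      intro i
      by_cases hoi : o (i : ℕ) = true <;> simp [hg, hoi]
    have h2 : (univ : Finset (Fin (4 * k))).card ≤
        2 * ((univ : Finset (Fin (4 * k))).image g).card := by
      apply Finset.card_le_mul_card_image
      intro b _
      apply card_le_two_of_val (x := (b : ℕ)) (y := (b : ℕ) - 1)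
      intro a ha
      have hab : g a = b := (Finset.mem_filter.mp ha).2
      have hab' : (g a : ℕ) = (b : ℕ) := by rw [hab]
      have := hval a
      omega
    have himg : (univ : Finset (Fin (4 * k))).image g ⊆ S := by
      intro x hx
      obtain ⟨i, _, rfl⟩ := Finset.mem_image.mp hx
      exact hgS i
    have h3 := Finset.card_le_card himg
    have h4 : (univ : Finset (Fin (4 * k))).card = 4 * k := by simp
    omega
  -- the key local bound : for each dominated color, (#dominators) + (#class) ≤ 3
  have key : ∀ a ∈ T,
      (S.filter (fun v => F v = a)).card + (univ.filter (fun w => c w = a)).card ≤ 3 := by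
    intro a haT
    obtain ⟨v₀, hv₀S, hv₀⟩ := Finset.mem_image.mp haT
    have hdv₀ : Dominates A c v₀ a := hv₀ ▸ hFdom v₀ hv₀S
    obtain ⟨w₀, hw₀⟩ := hdv₀.1
    have hfib : ∀ u ∈ S.filter (fun v => F v = a),
        (u : ℕ) + 1 = (w₀ : ℕ) ∨ (w₀ : ℕ) + 1 = (u : ℕ) := by
      intro u hu
      have hu' := Finset.mem_filter.mp hu
      have hdu : Dominates A c u a := hu'.2 ▸ hFdom u hu'.1
      exact pathArc_adj (hdu.2 w₀ hw₀)
    have hfib2 : (S.filter (fun v => F v = a)).card ≤ 2 := by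
      apply card_le_two_of_val (x := (w₀ : ℕ) - 1) (y := (w₀ : ℕ) + 1)
      intro u hu
      have := hfib u hu
      omega
    have hcls : ∀ w ∈ univ.filter (fun w => c w = a),
        (v₀ : ℕ) + 1 = (w : ℕ) ∨ (w : ℕ) + 1 = (v₀ : ℕ) := by
      intro w hw
      exact pathArc_adj (hdv₀.2 w (Finset.mem_filter.mp hw).2)
    have hcls2 : (univ.filter (fun w => c w = a)).card ≤ 2 := by
      apply card_le_two_of_val (x := (v₀ : ℕ) + 1) (y := (v₀ : ℕ) - 1)
      intro w hw
      have := hcls w hw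
      omega
    by_cases h2 : 2 ≤ (S.filter (fun v => F v = a)).card ∧
        2 ≤ (univ.filter (fun w => c w = a)).card
    · exfalso
      obtain ⟨u₁, hu₁, u₂, hu₂, hu12⟩ := Finset.one_lt_card.mp h2.1
      obtain ⟨x₁, hx₁, x₂, hx₂, hx12⟩ := Finset.one_lt_card.mp h2.2
      have hd1 : Dominates A c u₁ a :=
        (Finset.mem_filter.mp hu₁).2 ▸ hFdom u₁ (Finset.mem_filter.mp hu₁).1
      have hd2 : Dominates A c u₂ a :=
        (Finset.mem_filter.mp hu₂).2 ▸ hFdom u₂ (Finset.mem_filter.mp hu₂).1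
      have a11 := pathArc_adj (hd1.2 x₁ (Finset.mem_filter.mp hx₁).2)
      have a12 := pathArc_adj (hd1.2 x₂ (Finset.mem_filter.mp hx₂).2)
      have a21 := pathArc_adj (hd2.2 x₁ (Finset.mem_filter.mp hx₁).2)
      have a22 := pathArc_adj (hd2.2 x₂ (Finset.mem_filter.mp hx₂).2)
      have hune : (u₁ : ℕ) ≠ (u₂ : ℕ) := fun h => hu12 (Fin.val_injective h)
      have hxne : (x₁ : ℕ) ≠ (x₂ : ℕ) := fun h => hx12 (Fin.val_injective h)
      omega
    · omega
  -- summing over dominated colors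
  have hSsum : S.card = ∑ a ∈ T, (S.filter (fun v => F v = a)).card :=
    Finset.card_eq_sum_card_fiberwise (fun v hv => Finset.mem_image_of_mem F hv)
  set covered : Finset (Fin (4 * k + 1)) := univ.filter (fun w => c w ∈ T) with hcov
  have hcovsum : covered.card = ∑ a ∈ T, (univ.filter (fun w => c w = a)).card := by
    rw [Finset.card_eq_sum_card_fiberwise
      (s := covered) (t := T) (f := c) (fun w hw => (Finset.mem_filter.mp hw).2)]
    apply Finset.sum_congr rfl
    intro a ha
    congr 1
    ext w
    simp only [Finset.mem_filter, Finset.mem_univ, true_and, hcov]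
    constructor
    · rintro ⟨_, h⟩; exact h
    · intro h; exact ⟨by rw [h]; exact ha, h⟩
  have hmain : S.card + covered.card ≤ 3 * T.card := by
    rw [hSsum, hcovsum, ← Finset.sum_add_distrib]
    calc (∑ a ∈ T, ((S.filter (fun v => F v = a)).card
            + (univ.filter (fun w => c w = a)).card))
        ≤ ∑ _a ∈ T, 3 := Finset.sum_le_sum key
      _ = 3 * T.card := by rw [Finset.sum_const, smul_eq_mul, mul_comm]
  -- each dominated color has a nonempty class
  have hTcov : T.card ≤ covered.card := by
    have hsub : T ⊆ covered.image c := by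
      intro a ha
      obtain ⟨v, hvS, hFv⟩ := Finset.mem_image.mp ha
      obtain ⟨w, hw⟩ := (hFv ▸ hFdom v hvS).1
      exact Finset.mem_image.mpr
        ⟨w, Finset.mem_filter.mpr ⟨Finset.mem_univ w, by rw [hw]; exact ha⟩, hw⟩
    exact (Finset.card_le_card hsub).trans Finset.card_image_le
  -- uncovered vertices and their colors
  set U : Finset (Fin (4 * k + 1)) := univ.filter (fun w => ¬ (c w ∈ T)) with hU
  have hUcov : U.card + covered.card = 4 * k + 1 := by
    have h1 : covered.card + U.card = (univ : Finset (Fin (4 * k + 1))).card := by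
      rw [hcov, hU]
      exact Finset.card_filter_add_card_filter_not (fun w => c w ∈ T)
    have h2 : (univ : Finset (Fin (4 * k + 1))).card = 4 * k + 1 := by simp
    omega
  set X : Finset (Fin m) := U.image c with hX
  have hdisj : Disjoint T X := by
    rw [Finset.disjoint_right]
    intro a haX haT
    obtain ⟨w, hwU, hcw⟩ := Finset.mem_image.mp haX
    exact (Finset.mem_filter.mp hwU).2 (hcw ▸ haT)
  have hcards : T.card + X.card ≤ m := by
    have h1 : (T ∪ X).card ≤ m := by
      have := Finset.card_le_univ (T ∪ X)
      simpa using this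
    rwa [Finset.card_union_of_disjoint hdisj] at h1
  -- case analysis on the number of dominated colors
  by_cases hT2 : k + 2 ≤ T.card
  · omega
  push_neg at hT2
  have hTk : k ≤ T.card := by omega
  have hUpos : 1 ≤ U.card := by omega
  have hXpos : 1 ≤ X.card := by
    rw [hX]
    exact Finset.card_pos.mpr ((Finset.card_pos.mp (by omega)).image c)
  by_cases hT1 : k + 1 ≤ T.card
  · omega
  have hTk' : T.card = k := by omega
  by_cases hX2 : 2 ≤ X.card
  · omega
  -- remaining case: exactly k dominated colors and a single extra color
  have hmono : ∀ u ∈ U, ∀ u' ∈ U, c u = c u' := by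
    intro u hu u' hu'
    exact Finset.card_le_one.mp (Nat.lt_succ_iff.mp (Nat.lt_of_not_le hX2))
      _ (Finset.mem_image_of_mem c hu) _ (Finset.mem_image_of_mem c hu')
  -- then U is independent, hence has ≤ 2k+1 elements; contradiction with |U| ≥ 3k+1
  have hUle : U.card ≤ 2 * k + 1 := by
    have h1 : U.card ≤ (Finset.range (2 * k + 1)).card := by
      refine Finset.card_le_card_of_injOn (fun u => (u : ℕ) / 2) ?_ ?_
      · intro u _
        have := u.isLt
        simp only [Finset.mem_coe, Finset.mem_range]
        omega
      · intro u hu u' hu' hval2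
        have hv2 : (u : ℕ) / 2 = (u' : ℕ) / 2 := hval2
        by_contra hne
        have hu'' : u ∈ U := hu
        have hu''' : u' ∈ U := hu'
        have hvne : (u : ℕ) ≠ (u' : ℕ) := fun h => hne (Fin.val_injective h)
        have hcc : c u = c u' := hmono u hu'' u' hu'''
        have hadj : (u : ℕ) + 1 = (u' : ℕ) ∨ (u' : ℕ) + 1 = (u : ℕ) := by omega
        rcases hadj with h | h
        · rcases pathArc_of_adj o h with harc | harc
          · exact hproper _ _ harc hcc
          · exact hproper _ _ harc hcc.symm
        · rcases pathArc_of_adj o h with harc | harc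
          · exact hproper _ _ harc hcc.symm
          · exact hproper _ _ harc hcc
    simpa using h1
  omega

/-- The value (as a natural number) of the optimal coloring of the alternating
orientation: odd vertices get color `0`, multiples of `4` get color `1`, and
vertex `4j+2` gets color `j+2`. -/
def cval (v : ℕ) : ℕ := if v % 2 = 1 then 0 else if v % 4 = 0 then 1 else v / 4 + 2

lemma cval_bound {k : ℕ} {v : ℕ} (hv : v < 4 * k + 1) : cval v < k + 2 := by
  unfold cval
  split_ifs <;> omega

/-- The explicit dominator coloring of the alternating orientation with `k+2` colors. -/
lemma upper_col (k : ℕ) :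
    ∃ c : Fin (4 * k + 1) → Fin (k + 2),
      IsDominatorColoring (pathArc (4 * k + 1) (fun j => j % 2 == 1)) c := by
  refine ⟨fun v => ⟨cval (v : ℕ), cval_bound v.isLt⟩, ?_, ?_⟩
  · -- properness
    intro u v huv hcc
    have hval : cval (u : ℕ) = cval (v : ℕ) := congrArg Fin.val hcc
    have hodd : (u : ℕ) % 2 = 1 ∧ (v : ℕ) % 2 = 0 := by
      rcases huv with ⟨h1, h2⟩ | ⟨h1, h2⟩
      · simp only [beq_iff_eq] at h2
        exact ⟨h2, by omega⟩
      · simp only [beq_eq_false_iff_ne, ne_eq] at h2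
        exact ⟨by omega, by omega⟩
    unfold cval at hval
    rw [if_pos hodd.1, if_neg (by omega)] at hval
    split_ifs at hval
  · -- domination
    rintro v ⟨w, hw⟩
    have hvodd : (v : ℕ) % 2 = 1 := by
      rcases hw with ⟨h1, h2⟩ | ⟨h1, h2⟩
      · simpa using h2
      · simp only [beq_eq_false_iff_ne, ne_eq] at h2
        omega
    have hvlt := v.isLt
    have hjk : (v : ℕ) / 4 < k := by omega
    refine ⟨⟨(v : ℕ) / 4 + 2, by omega⟩, ⟨⟨4 * ((v : ℕ) / 4) + 2, by omega⟩, ?_⟩, ?_⟩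
    · apply Fin.ext
      show cval (4 * ((v : ℕ) / 4) + 2) = (v : ℕ) / 4 + 2
      unfold cval
      rw [if_neg (by omega), if_neg (by omega)]
      omega
    · intro x hx
      have hx' : cval (x : ℕ) = (v : ℕ) / 4 + 2 := congrArg Fin.val hx
      have hx4 : (x : ℕ) % 4 = 2 ∧ (x : ℕ) / 4 = (v : ℕ) / 4 := by
        unfold cval at hx'
        split_ifs at hx' <;> omega
      have hxval : (x : ℕ) = 4 * ((v : ℕ) / 4) + 2 := by omega
      rcases (by omega : (v : ℕ) = 4 * ((v : ℕ) / 4) + 1 ∨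
          (v : ℕ) = 4 * ((v : ℕ) / 4) + 3) with hv | hv
      · refine Or.inl ⟨by omega, ?_⟩
        simp only [beq_iff_eq]
        omega
      · refine Or.inr ⟨by omega, ?_⟩
        simp only [beq_eq_false_iff_ne, ne_eq]
        omega

theorem alternating_orientation_domChrom (k : ℕ) (hk : 1 ≤ k) :
    domChrom (pathArc (4 * k + 1) (fun j => j % 2 == 1)) = k + 2 ∧
    ∀ o : ℕ → Bool,
      domChrom (pathArc (4 * k + 1) (fun j => j % 2 == 1)) ≤
        domChrom (pathArc (4 * k + 1) o) := by
  have hlow : ∀ o : ℕ → Bool, k + 2 ≤ domChrom (pathArc (4 * k + 1) o) := by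
    intro o
    apply le_csInf ⟨4 * k + 1, id_dominator_coloring (4 * k + 1) o⟩
    rintro m ⟨c, hcol⟩
    exact lower_bound k hk o m c hcol
  have hup : domChrom (pathArc (4 * k + 1) (fun j => j % 2 == 1)) ≤ k + 2 :=
    Nat.sInf_le (upper_col k)
  have heq : domChrom (pathArc (4 * k + 1) (fun j => j % 2 == 1)) = k + 2 :=
    le_antisymm hup (hlow _)
  exact ⟨heq, fun o => heq ▸ hlow o⟩
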